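/- For any starting point s_0 ≥ 2, the sequence of increments (S_{n+1} − S_n)_{n∈ℕ} of the h-transformed peeling chain started at s_0 stochastically dominates the sequence of increments (Ŝ_{n+1} − Ŝ_n)_{n∈ℕ} of the unconditioned random walk started at s_0: for every n ≥ 1 and every bounded function F : ℤ^n → ℝ which is non-decreasing in each coordinate, E_{peel,s_0}[F(S_1−S_0, …, S_n−S_{n−1})] ≥ E_{rw,s_0}[F(Ŝ_1−Ŝ_0, …, Ŝ_n−Ŝ_{n−1})]. -/

import Mathlib

open MeasureTheory ProbabilityTheory

/-- The step distribution of the peeling random walk for type II triangulations. -/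
noncomputable def pStep : ℤ → ℝ := fun k =>
  if k = 1 then 2 / 3
  else if k ≤ -1 then
    2 * (Nat.factorial (2 * (-k).toNat - 2) : ℝ) /
      (4 ^ (-k).toNat * (Nat.factorial ((-k).toNat - 1) : ℝ) *
        (Nat.factorial ((-k).toNat + 1) : ℝ))
  else 0

/-- The harmonic function `h(k) = Γ(k+1/2)/Γ(k)` for `k ≥ 1`, `h(k) = 0` for `k ≤ 0`. -/
noncomputable def hFun : ℤ → ℝ := fun k =>
  if 1 ≤ k then Real.Gamma ((k : ℝ) + 1 / 2) / Real.Gamma (k : ℝ) else 0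

/-- Transition kernel of the peeling (h-transformed) chain on `{2,3,…}`. -/
noncomputable def peelKernel (s m : ℤ) : ℝ := hFun (m - 1) / hFun (s - 1) * pStep (m - s)

lemma pStep_nonneg (k : ℤ) : 0 ≤ pStep k := by
  unfold pStep
  split_ifs
  · norm_num
  · positivity
  · exact le_refl 0

lemma hFun_eq_zero {k : ℤ} (hk : k ≤ 0) : hFun k = 0 := by
  unfold hFun; rw [if_neg]; omega

lemma hFun_pos {k : ℤ} (hk : 1 ≤ k) : 0 < hFun k := by
  unfold hFun
  rw [if_pos hk]
  have h1 : (0:ℝ) < (k:ℝ) := by exact_mod_cast lt_of_lt_of_le zero_lt_one hk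
  have hA : 0 < Real.Gamma ((k:ℝ) + 1/2) := Real.Gamma_pos_of_pos (by linarith)
  have hB : 0 < Real.Gamma (k:ℝ) := Real.Gamma_pos_of_pos h1
  positivity

lemma hFun_nonneg (k : ℤ) : 0 ≤ hFun k := by
  rcases le_or_gt k 0 with h | h
  · rw [hFun_eq_zero h]
  · exact (hFun_pos h).le

lemma pos_of_hFun_ne_zero {k : ℤ} (h : hFun k ≠ 0) : 1 ≤ k := by
  by_contra hk
  exact h (hFun_eq_zero (by omega))

lemma hFun_mono : Monotone hFun := by
  apply monotone_int_of_le_succ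
  intro k
  rcases le_or_gt k 0 with h | h
  · rw [hFun_eq_zero h]; exact hFun_nonneg _
  · have hk1 : (1:ℤ) ≤ k := h
    have hkk : (1:ℤ) ≤ k + 1 := by omega
    unfold hFun
    rw [if_pos hk1, if_pos hkk]
    have hkR : (0:ℝ) < (k:ℝ) := by exact_mod_cast h
    have h2 : (0:ℝ) < (k:ℝ) + 1/2 := by linarith
    have hG1 : 0 < Real.Gamma (k:ℝ) := Real.Gamma_pos_of_pos hkR
    have hG2 : 0 < Real.Gamma ((k:ℝ) + 1/2) := Real.Gamma_pos_of_pos h2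
    have e1 : Real.Gamma (((k:ℤ)+1 : ℤ) : ℝ) = (k:ℝ) * Real.Gamma (k:ℝ) := by
      push_cast
      rw [Real.Gamma_add_one (ne_of_gt hkR)]
    have e2 : Real.Gamma ((((k:ℤ)+1 : ℤ) : ℝ) + 1/2) = ((k:ℝ)+1/2) * Real.Gamma ((k:ℝ)+1/2) := by
      push_cast
      have : (k:ℝ) + 1 + 1/2 = ((k:ℝ) + 1/2) + 1 := by ring
      rw [this, Real.Gamma_add_one (ne_of_gt h2)]
    rw [e1, e2]
    rw [div_le_div_iff₀ hG1 (by positivity)]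
    have : Real.Gamma ((k:ℝ)+1/2) * ((k:ℝ) * Real.Gamma (k:ℝ)) ≤ (((k:ℝ)+1/2) * Real.Gamma ((k:ℝ)+1/2)) * Real.Gamma (k:ℝ) := by
      nlinarith
    linarith

lemma peelKernel_nonneg (s m : ℤ) : 0 ≤ peelKernel s m := by
  unfold peelKernel
  have := hFun_nonneg (m-1)
  have := hFun_nonneg (s-1)
  have := pStep_nonneg (m - s)
  positivity

lemma peelKernel_eq_zero_of_lt {s m : ℤ} (h : s ≤ 1) : peelKernel s m = 0 := by
  unfold peelKernel
  rw [hFun_eq_zero (by omega : s - 1 ≤ 0)]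
  simp

lemma target_ge_of_peelKernel_ne_zero {s m : ℤ} (h : peelKernel s m ≠ 0) : 2 ≤ m := by
  unfold peelKernel at h
  have : hFun (m-1) ≠ 0 := by
    intro h0; rw [h0] at h; simp at h
  have := pos_of_hFun_ne_zero this
  omega

lemma pStep_one : pStep 1 = 2/3 := by unfold pStep; simp

lemma pStep_neg_pos {k : ℤ} (hk : k ≤ -1) : 0 < pStep k := by
  unfold pStep
  rw [if_neg (by omega), if_pos hk]
  have h1 : 0 < (Nat.factorial (2 * (-k).toNat - 2) : ℝ) := by exact_mod_cast Nat.factorial_pos _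
  have h2 : 0 < (Nat.factorial ((-k).toNat - 1) : ℝ) := by exact_mod_cast Nat.factorial_pos _
  have h3 : 0 < (Nat.factorial ((-k).toNat + 1) : ℝ) := by exact_mod_cast Nat.factorial_pos _
  positivity

lemma peelKernel_eq_ratio (s k : ℤ) :
    peelKernel s (s + k) = (hFun (s + k - 1) / hFun (s - 1)) * pStep k := by
  unfold peelKernel
  ring_nf

/-- One-step stochastic dominance. -/
lemma step_dom (s : ℤ) (hs : 2 ≤ s)
    (hp : Summable pStep) (hpsum : ∑' k, pStep k = 1)
    (hq : Summable (fun k => peelKernel s (s + k)))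
    (hqsum : ∑' k, peelKernel s (s + k) = 1)
    (g : ℤ → ℝ) (hg : Monotone g) (M : ℝ) (hM : ∀ k, |g k| ≤ M) :
    ∑' k, pStep k * g k ≤ ∑' k, peelKernel s (s + k) * g k := by
  set q : ℤ → ℝ := fun k => peelKernel s (s + k) with hqdef
  set r : ℤ → ℝ := fun k => hFun (s + k - 1) / hFun (s - 1) with hrdef
  have hs1 : (1:ℤ) ≤ s - 1 := by omega
  have hden : 0 < hFun (s - 1) := hFun_pos hs1
  have hqr : ∀ k, q k = r k * pStep k := fun k => peelKernel_eq_ratio s k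
  have hrmono : Monotone r := by
    intro a b hab
    exact (div_le_div_iff_of_pos_right hden).mpr (hFun_mono (by omega))
  have hr1 : 1 ≤ r 1 := by
    rw [hrdef]
    simp only
    rw [le_div_iff₀ hden, one_mul]
    exact hFun_mono (by omega)
  -- choose a threshold constant c
  obtain ⟨c, hc⟩ : ∃ c : ℝ, ∀ k, 0 ≤ (r k - 1) * (g k - c) := by
    by_cases hex : ∃ k, r k < 1
    · obtain ⟨t, ht, htl⟩ := Int.exists_least_of_bdd
        (P := fun k => 1 ≤ r k)
        ⟨Classical.choose hex, fun z hz => by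
          by_contra hlt
          push_neg at hlt
          have := hrmono (le_of_lt (by omega : z < Classical.choose hex))
          have h2 := Classical.choose_spec hex
          linarith⟩ ⟨1, hr1⟩
      refine ⟨g t, fun k => ?_⟩
      by_cases hk : 1 ≤ r k
      · have hkt : t ≤ k := htl k hk
        have := hg hkt
        nlinarith
      · push_neg at hk
        have hkt : k ≤ t := by
          by_contra hlt
          push_neg at hlt
          have := hrmono hlt.le
          linarith
        have := hg hkt
        nlinarith
    · push_neg at hex
      refine ⟨-(M+1), fun k => ?_⟩
      have h1 := hex k
      have h2 := (abs_le.mp (hM k)).1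
      nlinarith
  -- summability facts
  have hb : ∀ k, ‖pStep k * (g k - c)‖ ≤ (M + |c|) * pStep k := by
    intro k
    rw [norm_mul, Real.norm_eq_abs, Real.norm_eq_abs, abs_of_nonneg (pStep_nonneg k), mul_comm]
    have : |g k - c| ≤ M + |c| := by
      have := hM k
      have h1 := abs_sub_abs_le_abs_sub (g k) c
      have := abs_sub (g k) c
      calc |g k - c| ≤ |g k| + |c| := abs_sub _ _
        _ ≤ M + |c| := by linarith
    exact mul_le_mul_of_nonneg_right this (pStep_nonneg k)
  have hb' : ∀ k, ‖q k * (g k - c)‖ ≤ (M + |c|) * q k := by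
    intro k
    rw [norm_mul, Real.norm_eq_abs, Real.norm_eq_abs,
      abs_of_nonneg (peelKernel_nonneg s (s+k)), mul_comm]
    have : |g k - c| ≤ M + |c| := by
      have := hM k
      calc |g k - c| ≤ |g k| + |c| := abs_sub _ _
        _ ≤ M + |c| := by linarith
    exact mul_le_mul_of_nonneg_right this (peelKernel_nonneg s (s+k))
  have hsum_pgc : Summable (fun k => pStep k * (g k - c)) :=
    Summable.of_norm_bounded (hp.mul_left (M + |c|)) hb
  have hsum_qgc : Summable (fun k => q k * (g k - c)) :=
    Summable.of_norm_bounded (hq.mul_left (M + |c|)) hb'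
  have hsum_pg : Summable (fun k => pStep k * g k) := by
    have : (fun k => pStep k * g k) = fun k => pStep k * (g k - c) + pStep k * c := by
      funext k; ring
    rw [this]
    exact hsum_pgc.add (hp.mul_right c)
  have hsum_qg : Summable (fun k => q k * g k) := by
    have : (fun k => q k * g k) = fun k => q k * (g k - c) + q k * c := by
      funext k; ring
    rw [this]
    exact hsum_qgc.add (hq.mul_right c)
  -- main computation
  have key : ∑' k, q k * g k - ∑' k, pStep k * g k
      = ∑' k, (q k - pStep k) * (g k - c) := by
    have e1 : ∑' k, q k * (g k - c) = ∑' k, q k * g k - c := by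
      have : (fun k => q k * (g k - c)) = fun k => q k * g k - q k * c := by
        funext k; ring
      rw [this, Summable.tsum_sub hsum_qg (hq.mul_right c), tsum_mul_right, hqsum, one_mul]
    have e2 : ∑' k, pStep k * (g k - c) = ∑' k, pStep k * g k - c := by
      have : (fun k => pStep k * (g k - c)) = fun k => pStep k * g k - pStep k * c := by
        funext k; ring
      rw [this, Summable.tsum_sub hsum_pg (hp.mul_right c), tsum_mul_right, hpsum, one_mul]
    have e3 : ∑' k, (q k - pStep k) * (g k - c)
        = ∑' k, q k * (g k - c) - ∑' k, pStep k * (g k - c) := by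
      rw [← Summable.tsum_sub hsum_qgc hsum_pgc]
      congr 1; funext k; ring
    rw [e3, e1, e2]; ring
  have hterm : ∀ k, 0 ≤ (q k - pStep k) * (g k - c) := by
    intro k
    have : q k - pStep k = (r k - 1) * pStep k := by rw [hqr k]; ring
    rw [this]
    have h1 := hc k
    have h2 := pStep_nonneg k
    nlinarith
  have : 0 ≤ ∑' k, (q k - pStep k) * (g k - c) := tsum_nonneg hterm
  rw [hqdef] at key
  linarith [key]

/-- Random-walk weight of an increment vector. -/
noncomputable def wR (n : ℕ) (x : Fin n → ℤ) : ℝ := ∏ i, pStep (x i)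

/-- Peeling-chain weight of an increment vector, starting from `s`. -/
noncomputable def wP : ℤ → (n : ℕ) → (Fin n → ℤ) → ℝ
  | _, 0, _ => 1
  | s, n+1, x => peelKernel s (s + x 0) * wP (s + x 0) n (Fin.tail x)

lemma wR_zero (x : Fin 0 → ℤ) : wR 0 x = 1 := by simp [wR]

lemma wR_succ (n : ℕ) (x : Fin (n+1) → ℤ) :
    wR (n+1) x = pStep (x 0) * wR n (Fin.tail x) := by
  unfold wR
  rw [Fin.prod_univ_succ]
  rfl

lemma wR_nonneg (n : ℕ) (x : Fin n → ℤ) : 0 ≤ wR n x :=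
  Finset.prod_nonneg fun i _ => pStep_nonneg _

lemma wP_nonneg (s : ℤ) (n : ℕ) (x : Fin n → ℤ) : 0 ≤ wP s n x := by
  induction n generalizing s with
  | zero => rw [wP]; norm_num
  | succ n ih =>
    exact mul_nonneg (peelKernel_nonneg _ _) (ih _ _)

lemma wP_succ (s : ℤ) (n : ℕ) (x : Fin (n+1) → ℤ) :
    wP s (n+1) x = peelKernel s (s + x 0) * wP (s + x 0) n (Fin.tail x) := by rw [wP]

lemma wP_cons (s : ℤ) (n : ℕ) (k : ℤ) (y : Fin n → ℤ) :
    wP s (n+1) (Fin.cons k y) = peelKernel s (s + k) * wP (s + k) n y := by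
  rw [wP_succ, Fin.cons_zero, Fin.tail_cons]

lemma wR_cons (n : ℕ) (k : ℤ) (y : Fin n → ℤ) :
    wR (n+1) (Fin.cons k y) = pStep k * wR n y := by
  rw [wR_succ, Fin.cons_zero, Fin.tail_cons]

/-- Cylinder product formula for the peeling weights. -/
lemma cylinder_wP (n : ℕ) : ∀ (s : ℤ) (x : Fin n → ℤ) (m : ℕ → ℤ), m 0 = s →
    (∀ i : Fin n, m (i + 1) = m i + x i) →
    ∏ i ∈ Finset.range n, peelKernel (m i) (m (i + 1)) = wP s n x := by
  induction n with
  | zero => intro s x m h0 _; rw [wP]; simp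
  | succ n ih =>
    intro s x m h0 hstep
    rw [Finset.prod_range_succ']
    have h1 : m 1 = s + x 0 := by
      have := hstep 0
      simpa [h0] using this
    have hm0 : (fun i => m (i + 1)) 0 = s + x 0 := h1
    have hstep' : ∀ i : Fin n, (fun j => m (j + 1)) ((i : ℕ) + 1) = (fun j => m (j + 1)) (i : ℕ) + Fin.tail x i := by
      intro i
      show m ((i : ℕ) + 1 + 1) = m ((i : ℕ) + 1) + x i.succ
      have h := hstep i.succ
      simpa [Fin.val_succ] using h
    have hih := ih (s + x 0) (Fin.tail x) (fun i => m (i + 1)) hm0 hstep'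
    rw [hih, h0, h1, wP_succ]
    ring
/-- Cylinder product formula for the rw weights. -/
lemma cylinder_wR (n : ℕ) (x : Fin n → ℤ) (m : ℕ → ℤ)
    (hstep : ∀ i : Fin n, m (i + 1) - m i = x i) :
    ∏ i ∈ Finset.range n, pStep (m (i + 1) - m i) = wR n x := by
  rw [wR, ← Fin.prod_univ_eq_prod_range (fun i => pStep (m (i+1) - m i)) n]
  exact Finset.prod_congr rfl fun i _ => by rw [hstep i]

/-- The equivalence `ℤ × (Fin n → ℤ) ≃ (Fin (n+1) → ℤ)` by `Fin.cons`. -/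
def consEquiv (n : ℕ) : ℤ × (Fin n → ℤ) ≃ (Fin (n+1) → ℤ) where
  toFun p := Fin.cons p.1 p.2
  invFun x := (x 0, Fin.tail x)
  left_inv p := by simp
  right_inv x := by simp

lemma tsum_fin_succ {f : (Fin (n+1) → ℤ) → ENNReal} :
    ∑' x, f x = ∑' (k : ℤ), ∑' (y : Fin n → ℤ), f (Fin.cons k y) := by
  rw [← (consEquiv n).tsum_eq f]
  rw [← ENNReal.tsum_prod]
  rfl

lemma hFun_div_self_ne (s : ℤ) (k : ℤ) (h : peelKernel s (s + k) ≠ 0) : 2 ≤ s + k := by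
  have := target_ge_of_peelKernel_ne_zero h
  omega

/-- ENNReal sum of peel weights is 1. -/
lemma sum_wP_ennreal
    (H : ∀ s : ℤ, 2 ≤ s → ∑' k : ℤ, ENNReal.ofReal (peelKernel s (s + k)) = 1) :
    ∀ (n : ℕ) (s : ℤ), 2 ≤ s → ∑' x : Fin n → ℤ, ENNReal.ofReal (wP s n x) = 1 := by
  intro n
  induction n with
  | zero =>
    intro s hs
    have : ∑' x : Fin 0 → ℤ, ENNReal.ofReal (wP s 0 x) = ENNReal.ofReal (wP s 0 default) :=
      tsum_eq_single default (fun b hb => absurd (Subsingleton.elim b default) hb)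
    rw [this]
    rw [wP]
    simp
  | succ n ih =>
    intro s hs
    rw [tsum_fin_succ]
    have hterm : ∀ k y, ENNReal.ofReal (wP s (n+1) (Fin.cons k y))
        = ENNReal.ofReal (peelKernel s (s + k)) * ENNReal.ofReal (wP (s+k) n y) := by
      intro k y
      rw [wP_cons, ENNReal.ofReal_mul (peelKernel_nonneg _ _)]
    calc ∑' (k : ℤ), ∑' (y : Fin n → ℤ), ENNReal.ofReal (wP s (n+1) (Fin.cons k y))
        = ∑' (k : ℤ), ENNReal.ofReal (peelKernel s (s + k))
            * ∑' (y : Fin n → ℤ), ENNReal.ofReal (wP (s+k) n y) := by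
          congr 1; funext k
          rw [← ENNReal.tsum_mul_left]
          congr 1; funext y; exact hterm k y
      _ = ∑' (k : ℤ), ENNReal.ofReal (peelKernel s (s + k)) := by
          congr 1; funext k
          by_cases hk : peelKernel s (s + k) = 0
          · rw [hk]; simp
          · rw [ih (s+k) (hFun_div_self_ne s k hk), mul_one]
      _ = 1 := H s hs
/-- ENNReal sum of rw weights is 1. -/
lemma sum_wR_ennreal (H : ∑' k : ℤ, ENNReal.ofReal (pStep k) = 1) :
    ∀ (n : ℕ), ∑' x : Fin n → ℤ, ENNReal.ofReal (wR n x) = 1 := by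
  intro n
  induction n with
  | zero =>
    have : ∑' x : Fin 0 → ℤ, ENNReal.ofReal (wR 0 x) = ENNReal.ofReal (wR 0 default) :=
      tsum_eq_single default (fun b hb => absurd (Subsingleton.elim b default) hb)
    rw [this, wR_zero]
    simp
  | succ n ih =>
    rw [tsum_fin_succ]
    calc ∑' (k : ℤ), ∑' (y : Fin n → ℤ), ENNReal.ofReal (wR (n+1) (Fin.cons k y))
        = ∑' (k : ℤ), ENNReal.ofReal (pStep k)
            * ∑' (y : Fin n → ℤ), ENNReal.ofReal (wR n y) := by
          congr 1; funext k
          rw [← ENNReal.tsum_mul_left]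
          congr 1; funext y
          rw [wR_cons, ENNReal.ofReal_mul (pStep_nonneg _)]
      _ = 1 := by rw [ih]; simp [H]

/-- From an `ENNReal` tsum equal to 1, recover real summability and sum. -/
lemma real_of_ennreal {ι : Type*} (f : ι → ℝ) (h0 : ∀ i, 0 ≤ f i)
    (h : ∑' i, ENNReal.ofReal (f i) = 1) : Summable f ∧ ∑' i, f i = 1 := by
  have hne : ∑' i, ENNReal.ofReal (f i) ≠ ⊤ := by rw [h]; exact ENNReal.one_ne_top
  have hsumm := ENNReal.summable_toReal hne
  have heq : (fun i => (ENNReal.ofReal (f i)).toReal) = f := by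
    funext i; exact ENNReal.toReal_ofReal (h0 i)
  rw [heq] at hsumm
  refine ⟨hsumm, ?_⟩
  have h2 : (∑' i, ENNReal.ofReal (f i)).toReal = ∑' i, (ENNReal.ofReal (f i)).toReal :=
    ENNReal.tsum_toReal_eq (fun i => ENNReal.ofReal_ne_top)
  rw [heq, h] at h2
  simpa using h2.symm

/-- Helper: weighted sums with weights summing to 1 of a bounded function are bounded. -/
lemma bound_tsum {ι : Type*} {w : ι → ℝ} (hw : Summable w) (hw0 : ∀ i, 0 ≤ w i)
    (hw1 : ∑' i, w i = 1) {φ : ι → ℝ} {M : ℝ} (hφ : ∀ i, |φ i| ≤ M) :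
    Summable (fun i => w i * φ i) ∧ |∑' i, w i * φ i| ≤ M := by
  have hb : ∀ i, ‖w i * φ i‖ ≤ M * w i := by
    intro i
    rw [norm_mul, Real.norm_eq_abs, Real.norm_eq_abs, abs_of_nonneg (hw0 i), mul_comm]
    exact mul_le_mul_of_nonneg_right (hφ i) (hw0 i)
  have hs : Summable (fun i => w i * φ i) :=
    Summable.of_norm_bounded (hw.mul_left M) hb
  refine ⟨hs, ?_⟩
  calc |∑' i, w i * φ i| ≤ ∑' i, ‖w i * φ i‖ := by
        simpa using norm_tsum_le_tsum_norm (hs.norm)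
    _ ≤ ∑' i, M * w i := Summable.tsum_le_tsum hb hs.norm (hw.mul_left M)
    _ = M := by rw [tsum_mul_left, hw1, mul_one]

lemma cons_mono {n : ℕ} {k k' : ℤ} (h : k ≤ k') (y : Fin n → ℤ) :
    (Fin.cons k y : Fin (n+1) → ℤ) ≤ Fin.cons k' y := by
  intro i
  refine Fin.cases ?_ ?_ i
  · simpa using h
  · intro j; simp

/-- Main comparison inequality between weighted sums. -/
lemma main_ineq
    (hp : Summable pStep) (hp1 : ∑' k, pStep k = 1)
    (hq : ∀ s : ℤ, 2 ≤ s → Summable (fun k => peelKernel s (s+k)))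
    (hq1 : ∀ s : ℤ, 2 ≤ s → ∑' k, peelKernel s (s+k) = 1)
    (hwR : ∀ n, Summable (wR n)) (hwR1 : ∀ n, ∑' x, wR n x = 1)
    (hwP : ∀ (n : ℕ) (s : ℤ), 2 ≤ s → Summable (wP s n))
    (hwP1 : ∀ (n : ℕ) (s : ℤ), 2 ≤ s → ∑' x, wP s n x = 1) :
    ∀ (n : ℕ) (s : ℤ), 2 ≤ s → ∀ (F : (Fin n → ℤ) → ℝ) (M : ℝ), Monotone F →
      (∀ x, |F x| ≤ M) →
      ∑' x, wR n x * F x ≤ ∑' x, wP s n x * F x := by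
  intro n
  induction n with
  | zero =>
    intro s hs F M _ _
    rw [tsum_eq_single default (fun b hb => absurd (Subsingleton.elim b default) hb),
      tsum_eq_single default (fun b hb => absurd (Subsingleton.elim b default) hb)]
    rw [wR_zero]
    rw [show wP s 0 default = 1 from by rw [wP]]
  | succ n ih =>
    intro s hs F M hF hFb
    have hM0 : 0 ≤ M := le_trans (abs_nonneg _) (hFb default)
    -- the inner expectations
    set g : ℤ → ℝ := fun k => ∑' y : Fin n → ℤ, wR n y * F (Fin.cons k y) with hgdef
    set G : ℤ → ℝ := fun k => ∑' y : Fin n → ℤ, wP (s+k) n y * F (Fin.cons k y) with hGdef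
    have hginner : ∀ k, Summable (fun y : Fin n → ℤ => wR n y * F (Fin.cons k y)) ∧ |g k| ≤ M :=
      fun k => bound_tsum (hwR n) (wR_nonneg n) (hwR1 n) (fun y => hFb _)
    have hGinner : ∀ k, 2 ≤ s + k →
        Summable (fun y : Fin n → ℤ => wP (s+k) n y * F (Fin.cons k y)) ∧ |G k| ≤ M :=
      fun k hk => bound_tsum (hwP n (s+k) hk) (wP_nonneg (s+k) n) (hwP1 n (s+k) hk)
        (fun y => hFb _)
    have hgmono : Monotone g := by
      intro a b hab
      exact Summable.tsum_le_tsum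
        (fun y => mul_le_mul_of_nonneg_left (hF (cons_mono hab y)) (wR_nonneg n y))
        (hginner a).1 (hginner b).1
    -- decompose LHS
    have hLHS : ∑' x : Fin (n+1) → ℤ, wR (n+1) x * F x = ∑' k : ℤ, pStep k * g k := by
      have hsummf : Summable (fun x : Fin (n+1) → ℤ => wR (n+1) x * F x) :=
        (bound_tsum (hwR (n+1)) (wR_nonneg (n+1)) (hwR1 (n+1)) hFb).1
      rw [← (consEquiv n).tsum_eq (fun x => wR (n+1) x * F x)]
      have hsummf' : Summable (fun p : ℤ × (Fin n → ℤ) =>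
          wR (n+1) (consEquiv n p) * F (consEquiv n p)) :=
        ((consEquiv n).summable_iff ).mpr hsummf
      rw [Summable.tsum_prod' hsummf' (fun k => by
        have := (hginner k).1
        have heq : (fun y => wR (n+1) (consEquiv n (k, y)) * F (consEquiv n (k, y)))
            = fun y => pStep k * (wR n y * F (Fin.cons k y)) := by
          funext y
          show wR (n+1) (Fin.cons k y) * F (Fin.cons k y) = _
          rw [wR_cons]; ring
        rw [heq]
        exact this.mul_left _)]
      congr 1; funext k
      have heq : (fun y => wR (n+1) (consEquiv n (k, y)) * F (consEquiv n (k, y)))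
          = fun y => pStep k * (wR n y * F (Fin.cons k y)) := by
        funext y
        show wR (n+1) (Fin.cons k y) * F (Fin.cons k y) = _
        rw [wR_cons]; ring
      show ∑' y, wR (n+1) (consEquiv n (k, y)) * F (consEquiv n (k, y)) = _
      rw [heq, tsum_mul_left]
    -- decompose RHS
    have hRHS : ∑' x : Fin (n+1) → ℤ, wP s (n+1) x * F x
        = ∑' k : ℤ, peelKernel s (s+k) * G k := by
      have hsummf : Summable (fun x : Fin (n+1) → ℤ => wP s (n+1) x * F x) :=
        (bound_tsum (hwP (n+1) s hs) (wP_nonneg s (n+1)) (hwP1 (n+1) s hs) hFb).1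
      rw [← (consEquiv n).tsum_eq (fun x => wP s (n+1) x * F x)]
      have hsummf' : Summable (fun p : ℤ × (Fin n → ℤ) =>
          wP s (n+1) (consEquiv n p) * F (consEquiv n p)) :=
        ((consEquiv n).summable_iff).mpr hsummf
      have heq : ∀ k, (fun y => wP s (n+1) (consEquiv n (k, y)) * F (consEquiv n (k, y)))
          = fun y => peelKernel s (s+k) * (wP (s+k) n y * F (Fin.cons k y)) := by
        intro k
        funext y
        show wP s (n+1) (Fin.cons k y) * F (Fin.cons k y) = _
        rw [wP_cons]; ring
      rw [Summable.tsum_prod' hsummf' (fun k => by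
        rw [heq k]
        by_cases hk : 2 ≤ s + k
        · exact ((hGinner k hk).1).mul_left _
        · have : peelKernel s (s+k) = 0 := by
            by_contra h
            exact hk (target_ge_of_peelKernel_ne_zero h)
          simp only [this, zero_mul]
          exact summable_zero)]
      congr 1; funext k
      show ∑' y, wP s (n+1) (consEquiv n (k, y)) * F (consEquiv n (k, y)) = _
      rw [heq k]
      rw [tsum_mul_left]
    rw [hLHS, hRHS]
    -- two-step comparison
    have hqk : Summable (fun k => peelKernel s (s+k)) := hq s hs
    have step1 : ∑' k, pStep k * g k ≤ ∑' k, peelKernel s (s+k) * g k :=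
      step_dom s hs hp hp1 hqk (hq1 s hs) g hgmono M (fun k => (hginner k).2)
    have hsum_qg : Summable (fun k => peelKernel s (s+k) * g k) :=
      (bound_tsum hqk (fun k => peelKernel_nonneg _ _) (hq1 s hs) (fun k => (hginner k).2)).1
    have hGb : ∀ k, |peelKernel s (s+k) * G k| ≤ M * peelKernel s (s+k) := by
      intro k
      by_cases hk : 2 ≤ s + k
      · rw [abs_mul, abs_of_nonneg (peelKernel_nonneg _ _), mul_comm]
        exact mul_le_mul_of_nonneg_right (hGinner k hk).2 (peelKernel_nonneg _ _)
      · have : peelKernel s (s+k) = 0 := by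
          by_contra h
          exact hk (target_ge_of_peelKernel_ne_zero h)
        simp [this]
    have hsum_qG : Summable (fun k => peelKernel s (s+k) * G k) :=
      Summable.of_norm_bounded (hqk.mul_left M) (fun k => by
        rw [Real.norm_eq_abs]; exact hGb k)
    have step2 : ∑' k, peelKernel s (s+k) * g k ≤ ∑' k, peelKernel s (s+k) * G k := by
      refine Summable.tsum_le_tsum (fun k => ?_) hsum_qg hsum_qG
      by_cases hk : 2 ≤ s + k
      · refine mul_le_mul_of_nonneg_left ?_ (peelKernel_nonneg _ _)
        exact ih (s+k) hk (fun y => F (Fin.cons k y)) M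
          (fun a b hab => hF (by
            intro i
            refine Fin.cases ?_ ?_ i
            · simp
            · intro j; simpa using hab j))
          (fun y => hFb _)
      · have : peelKernel s (s+k) = 0 := by
          by_contra h
          exact hk (target_ge_of_peelKernel_ne_zero h)
        simp [this]
    linarith

section Glue

variable {Ω : Type*} [MeasurableSpace Ω]

lemma cylSet_meas (X : ℕ → Ω → ℤ) (hX : ∀ i, Measurable (X i)) (N : ℕ) (m : ℕ → ℤ) :
    MeasurableSet {ω | ∀ i ≤ N, X i ω = m i} := by
  have : {ω | ∀ i ≤ N, X i ω = m i} = ⋂ (i : ℕ) (_ : i ≤ N), (X i) ⁻¹' {m i} := by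
    ext ω; simp [Set.mem_iInter]
  rw [this]
  exact MeasurableSet.iInter fun i => MeasurableSet.iInter fun _ =>
    (hX i) (measurableSet_singleton _)

/-- One-step extension of a path. -/
def extPath (N : ℕ) (m : ℕ → ℤ) (k : ℤ) : ℕ → ℤ := fun j => if j ≤ N then m j else m N + k

lemma extPath_le {N j : ℕ} (m : ℕ → ℤ) (k : ℤ) (h : j ≤ N) : extPath N m k j = m j :=
  if_pos h

lemma extPath_gt {N j : ℕ} (m : ℕ → ℤ) (k : ℤ) (h : ¬ j ≤ N) : extPath N m k j = m N + k :=
  if_neg h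

/-- From a partition of a cylinder into one-step extensions, the one-step kernel sums to 1. -/
lemma chain_step_sum (P : Measure Ω) (X : ℕ → Ω → ℤ) (hX : ∀ i, Measurable (X i))
    (N : ℕ) (m : ℕ → ℤ) (C : ℝ) (hC : 0 < C) (q : ℤ → ℝ) (hq0 : ∀ k, 0 ≤ q k)
    (hN : P {ω | ∀ i ≤ N, X i ω = m i} = ENNReal.ofReal C)
    (hNk : ∀ k : ℤ,
      P {ω | ∀ i ≤ N + 1, X i ω = extPath N m k i}
        = ENNReal.ofReal (C * q k)) :
    ∑' k : ℤ, ENNReal.ofReal (q k) = 1 := by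
  set E : ℤ → Set Ω := fun k =>
    {ω | ∀ i ≤ N + 1, X i ω = extPath N m k i} with hE
  have hmeas : ∀ k, MeasurableSet (E k) := fun k => cylSet_meas X hX (N+1) _
  have hdisj : Pairwise (Function.onFun Disjoint E) := by
    intro k k' hkk'
    rw [Function.onFun, Set.disjoint_left]
    intro ω h1 h2
    have e1 := h1 (N+1) le_rfl
    have e2 := h2 (N+1) le_rfl
    rw [extPath_gt m k (by omega)] at e1
    rw [extPath_gt m k' (by omega)] at e2
    exact hkk' (by omega)
  have hUnion : (⋃ k, E k) = {ω | ∀ i ≤ N, X i ω = m i} := by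
    ext ω
    constructor
    · rintro ⟨s, ⟨k, rfl⟩, hω⟩
      intro i hi
      have := hω i (by omega)
      rwa [extPath_le m _ hi] at this
    · intro hω
      refine Set.mem_iUnion.mpr ⟨X (N+1) ω - m N, fun i hi => ?_⟩
      by_cases h : i ≤ N
      · rw [extPath_le m _ h]; exact hω i h
      · have : i = N + 1 := by omega
        subst this
        rw [extPath_gt m _ h]
        omega
  have hsum : ∑' k, P (E k) = P (⋃ k, E k) := (measure_iUnion hdisj hmeas).symm
  rw [hUnion, hN] at hsum
  have : ∀ k, P (E k) = ENNReal.ofReal C * ENNReal.ofReal (q k) := by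
    intro k
    rw [hNk k, ENNReal.ofReal_mul hC.le]
  simp only [this] at hsum
  rw [ENNReal.tsum_mul_left] at hsum
  have hC0 : ENNReal.ofReal C ≠ 0 := by
    simp [ENNReal.ofReal_eq_zero]; linarith
  have hCt : ENNReal.ofReal C ≠ ⊤ := ENNReal.ofReal_ne_top
  exact (ENNReal.mul_right_inj hC0 hCt).mp (by rw [hsum, mul_one])

/-- The path associated to an increment vector. -/
def pathOf (s₀ : ℤ) (n : ℕ) (x : Fin n → ℤ) : ℕ → ℤ := fun i =>
  s₀ + ∑ j ∈ Finset.range i, (if h : j < n then x ⟨j, h⟩ else 0)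

lemma pathOf_zero (s₀ : ℤ) (n : ℕ) (x : Fin n → ℤ) : pathOf s₀ n x 0 = s₀ := by
  simp [pathOf]

lemma pathOf_step (s₀ : ℤ) (n : ℕ) (x : Fin n → ℤ) (i : ℕ) (hi : i < n) :
    pathOf s₀ n x (i + 1) = pathOf s₀ n x i + x ⟨i, hi⟩ := by
  unfold pathOf
  rw [Finset.sum_range_succ, dif_pos hi]
  ring

/-- Integral of a bounded measurable function of the increments as a weighted sum. -/
lemma integral_eq_tsum (P : Measure Ω) [IsProbabilityMeasure P] (s₀ : ℤ) (n : ℕ)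
    (X : ℕ → Ω → ℤ) (hX : ∀ i, Measurable (X i))
    (w : (Fin n → ℤ) → ℝ) (hw0 : ∀ x, 0 ≤ w x)
    (h0 : P {ω | X 0 ω = s₀} = 1)
    (hcyl : ∀ x : Fin n → ℤ,
      P {ω | ∀ i ≤ n, X i ω = pathOf s₀ n x i} = ENNReal.ofReal (w x))
    (F : (Fin n → ℤ) → ℝ) (hFmeas : Measurable F) (M : ℝ) (hFb : ∀ x, |F x| ≤ M) :
    ∫ ω, F (fun i : Fin n => X ((i : ℕ) + 1) ω - X (i : ℕ) ω) ∂P = ∑' x, w x * F x := by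
  set g : Ω → (Fin n → ℤ) := fun ω => fun i : Fin n => X ((i : ℕ) + 1) ω - X (i : ℕ) ω with hg
  have hgmeas : Measurable g :=
    measurable_pi_lambda _ fun i => ((hX _).sub (hX _))
  have hU : MeasurableSet {ω | X 0 ω = s₀} := (hX 0) (measurableSet_singleton _)
  have hUc : P {ω | X 0 ω = s₀}ᶜ = 0 := by
    rw [measure_compl hU (measure_ne_top _ _), h0, measure_univ, tsub_self]
  -- the key singleton computation
  have hsing : ∀ x : Fin n → ℤ, P (g ⁻¹' {x}) = ENNReal.ofReal (w x) := by
    intro x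
    have hAU : g ⁻¹' {x} ∩ {ω | X 0 ω = s₀} = {ω | ∀ i ≤ n, X i ω = pathOf s₀ n x i} := by
      ext ω
      constructor
      · rintro ⟨hA, hU0⟩
        have hgx : g ω = x := hA
        intro i hi
        induction i with
        | zero => rw [pathOf_zero]; exact hU0
        | succ i ih =>
          have hi' : i < n := by omega
          have hstep : X (i+1) ω - X i ω = x ⟨i, hi'⟩ := congrFun hgx ⟨i, hi'⟩
          rw [pathOf_step s₀ n x i hi', ← ih (by omega)]
          omega
      · intro hω
        have h00 : X 0 ω = s₀ := by
          have := hω 0 (Nat.zero_le n)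
          rwa [pathOf_zero] at this
        refine ⟨?_, h00⟩
        show g ω = x
        funext i
        have h1 := hω ((i : ℕ) + 1) (by omega)
        have h2 := hω (i : ℕ) (by omega)
        show X ((i : ℕ) + 1) ω - X (i : ℕ) ω = x i
        rw [h1, h2, pathOf_step s₀ n x (i : ℕ) i.isLt]
        simp
    have hsplit : P (g ⁻¹' {x}) =
        P (g ⁻¹' {x} ∩ {ω | X 0 ω = s₀}) + P (g ⁻¹' {x} \ {ω | X 0 ω = s₀}) :=
      (measure_inter_add_diff _ hU).symm
    have hdiff : P (g ⁻¹' {x} \ {ω | X 0 ω = s₀}) = 0 :=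
      le_antisymm (le_trans (measure_mono (Set.diff_subset_compl _ _)) hUc.le) zero_le
    rw [hsplit, hdiff, add_zero, hAU, hcyl x]
  -- integrability
  have hFg : Measurable fun ω => F (g ω) := hFmeas.comp hgmeas
  have hint : Integrable (fun ω => F (g ω)) P := by
    refine Integrable.mono' (integrable_const M) hFg.aestronglyMeasurable ?_
    exact Filter.Eventually.of_forall fun ω => by simpa using hFb (g ω)
  have hintF : Integrable F (Measure.map g P) :=
    (integrable_map_measure hFmeas.aestronglyMeasurable hgmeas.aemeasurable).mpr hint
  calc ∫ ω, F (g ω) ∂P = ∫ x, F x ∂(Measure.map g P) :=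
        (integral_map hgmeas.aemeasurable hFmeas.aestronglyMeasurable).symm
    _ = ∑' x, ((Measure.map g P) {x}).toReal • F x := integral_countable' hintF
    _ = ∑' x, w x * F x := by
        congr 1; funext x
        rw [Measure.map_apply hgmeas (measurableSet_singleton x), hsing x,
          ENNReal.toReal_ofReal (hw0 x), smul_eq_mul]

end Glue

lemma cyl0_eq {Ω : Type*} (X : ℕ → Ω → ℤ) (m : ℕ → ℤ) :
    {ω | ∀ i ≤ 0, X i ω = m i} = {ω | X 0 ω = m 0} := by
  ext ω
  simp [Nat.le_zero]

lemma peelKernel_up_pos {t : ℤ} (ht : 2 ≤ t) : 0 < peelKernel t (t + 1) := by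
  unfold peelKernel
  have h1 : t + 1 - 1 = t := by ring
  have h2 : t + 1 - t = 1 := by ring
  rw [h1, h2, pStep_one]
  have := hFun_pos (show (1:ℤ) ≤ t by omega)
  have := hFun_pos (show (1:ℤ) ≤ t - 1 by omega)
  positivity

lemma peelKernel_down_pos {s m : ℤ} (hm : 2 ≤ m) (h : m ≤ s - 1) : 0 < peelKernel s m := by
  unfold peelKernel
  have h1 := hFun_pos (show (1:ℤ) ≤ m - 1 by omega)
  have h2 := hFun_pos (show (1:ℤ) ≤ s - 1 by omega)
  have h3 := pStep_neg_pos (show m - s ≤ -1 by omega)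
  positivity

lemma reach (s₀ : ℤ) (hs₀ : 2 ≤ s₀) (s : ℤ) (hs : 2 ≤ s) :
    ∃ (N : ℕ) (m : ℕ → ℤ), m 0 = s₀ ∧ m N = s ∧
      0 < ∏ i ∈ Finset.range N, peelKernel (m i) (m (i + 1)) := by
  set j := (s + 1 - s₀).toNat with hj
  have htop : s + 1 ≤ s₀ + j := by
    have := Int.self_le_toNat (s + 1 - s₀)
    omega
  set m : ℕ → ℤ := fun i => if i ≤ j then s₀ + i else s with hm
  have hmval : ∀ i : ℕ, i ≤ j → m i = s₀ + i := fun i hi => if_pos hi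
  have hmval' : ∀ i : ℕ, ¬ i ≤ j → m i = s := fun i hi => if_neg hi
  refine ⟨j + 1, m, by simpa using hmval 0 (Nat.zero_le j), hmval' (j+1) (by omega), ?_⟩
  rw [Finset.prod_range_succ]
  apply mul_pos
  · apply Finset.prod_pos
    intro i hi
    rw [Finset.mem_range] at hi
    have h2 : m (i + 1) = s₀ + (i:ℤ) + 1 := by
      rw [hmval (i+1) (by omega)]; push_cast; ring
    rw [hmval i (by omega), h2]
    exact peelKernel_up_pos (by omega)
  · rw [hmval j le_rfl, hmval' (j+1) (by omega)]
    exact peelKernel_down_pos hs (by omega)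


/-- The increments of the h-transformed peeling chain started at `s₀ ≥ 2` stochastically
dominate the increments of the unconditioned random walk with step distribution `(p_k)`
started at `s₀`: for every `n` and every bounded measurable `F : ℤⁿ → ℝ` which is
non-decreasing in each coordinate (i.e. monotone for the pointwise order),
`E_peel[F(S₁-S₀,…,Sₙ-Sₙ₋₁)] ≥ E_rw[F(Ŝ₁-Ŝ₀,…,Ŝₙ-Ŝₙ₋₁)]`. -/
theorem peeling_increments_dominate_rw_increments
    {Ω₁ : Type*} [MeasurableSpace Ω₁] (P₁ : Measure Ω₁) [IsProbabilityMeasure P₁]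
    {Ω₂ : Type*} [MeasurableSpace Ω₂] (P₂ : Measure Ω₂) [IsProbabilityMeasure P₂]
    (s₀ : ℤ) (hs₀ : 2 ≤ s₀)
    (S : ℕ → Ω₁ → ℤ) (hSmeas : ∀ i, Measurable (S i))
    (hSfdd : ∀ (n : ℕ) (m : ℕ → ℤ), m 0 = s₀ →
      P₁ {ω | ∀ i ≤ n, S i ω = m i} =
        ENNReal.ofReal (∏ i ∈ Finset.range n, peelKernel (m i) (m (i + 1))))
    (W : ℕ → Ω₂ → ℤ) (hWmeas : ∀ i, Measurable (W i))
    (hWfdd : ∀ (n : ℕ) (m : ℕ → ℤ), m 0 = s₀ →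
      P₂ {ω | ∀ i ≤ n, W i ω = m i} =
        ENNReal.ofReal (∏ i ∈ Finset.range n, pStep (m (i + 1) - m i))) :
    ∀ (n : ℕ) (F : (Fin n → ℤ) → ℝ), Measurable F → Monotone F →
      (∃ M : ℝ, ∀ x, |F x| ≤ M) →
      ∫ ω, F (fun i : Fin n => W ((i : ℕ) + 1) ω - W (i : ℕ) ω) ∂P₂ ≤
        ∫ ω, F (fun i : Fin n => S ((i : ℕ) + 1) ω - S (i : ℕ) ω) ∂P₁ := by
  -- the one-step ENNReal sums
  have hpsum_e : ∑' k : ℤ, ENNReal.ofReal (pStep k) = 1 := by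
    apply chain_step_sum P₂ W hWmeas 0 (fun _ => s₀) 1 one_pos pStep pStep_nonneg
    · rw [hWfdd 0 (fun _ => s₀) rfl]
      simp
    · intro k
      have he0 : extPath 0 (fun _ => s₀) k 0 = s₀ := extPath_le _ k le_rfl
      rw [hWfdd 1 (extPath 0 (fun _ => s₀) k) he0]
      congr 1
      rw [Finset.prod_range_one, extPath_le _ k le_rfl, extPath_gt _ k (by omega)]
      norm_num
  have hqsum_e : ∀ s : ℤ, 2 ≤ s → ∑' k : ℤ, ENNReal.ofReal (peelKernel s (s + k)) = 1 := by
    intro s hs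
    obtain ⟨N, m, hm0, hmN, hCpos⟩ := reach s₀ hs₀ s hs
    apply chain_step_sum P₁ S hSmeas N m _ hCpos _ (fun k => peelKernel_nonneg _ _)
    · rw [hSfdd N m hm0]
    · intro k
      have he0 : extPath N m k 0 = s₀ := (extPath_le m k (Nat.zero_le N)).trans hm0
      rw [hSfdd (N+1) (extPath N m k) he0]
      congr 1
      rw [Finset.prod_range_succ]
      have hfac : ∀ i ∈ Finset.range N,
          peelKernel (extPath N m k i) (extPath N m k (i+1)) = peelKernel (m i) (m (i+1)) := by
        intro i hi
        rw [Finset.mem_range] at hi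
        rw [extPath_le m k (by omega), extPath_le m k (by omega)]
      rw [Finset.prod_congr rfl hfac, extPath_le m k le_rfl, extPath_gt m k (by omega), hmN]
  -- real summability facts
  obtain ⟨hp, hp1⟩ := real_of_ennreal pStep pStep_nonneg hpsum_e
  have hqfact : ∀ s : ℤ, 2 ≤ s →
      Summable (fun k => peelKernel s (s + k)) ∧ ∑' k, peelKernel s (s + k) = 1 :=
    fun s hs => real_of_ennreal _ (fun k => peelKernel_nonneg _ _) (hqsum_e s hs)
  have hwRfact : ∀ n : ℕ, Summable (wR n) ∧ ∑' x, wR n x = 1 :=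
    fun n => real_of_ennreal _ (wR_nonneg n) (sum_wR_ennreal hpsum_e n)
  have hwPfact : ∀ (n : ℕ) (s : ℤ), 2 ≤ s → Summable (wP s n) ∧ ∑' x, wP s n x = 1 :=
    fun n s hs => real_of_ennreal _ (wP_nonneg s n) (sum_wP_ennreal hqsum_e n s hs)
  -- start events
  have h0S : P₁ {ω | S 0 ω = s₀} = 1 := by
    have := hSfdd 0 (fun _ => s₀) rfl
    rw [cyl0_eq S (fun _ => s₀)] at this
    simpa using this
  have h0W : P₂ {ω | W 0 ω = s₀} = 1 := by
    have := hWfdd 0 (fun _ => s₀) rfl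
    rw [cyl0_eq W (fun _ => s₀)] at this
    simpa using this
  intro n F hFmeas hFmono ⟨M, hM⟩
  -- cylinder formulas
  have hcylW : ∀ x : Fin n → ℤ,
      P₂ {ω | ∀ i ≤ n, W i ω = pathOf s₀ n x i} = ENNReal.ofReal (wR n x) := by
    intro x
    rw [hWfdd n (pathOf s₀ n x) (pathOf_zero s₀ n x)]
    congr 1
    apply cylinder_wR
    intro i
    rw [pathOf_step s₀ n x (i : ℕ) i.isLt]
    simp
  have hcylS : ∀ x : Fin n → ℤ,
      P₁ {ω | ∀ i ≤ n, S i ω = pathOf s₀ n x i} = ENNReal.ofReal (wP s₀ n x) := by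
    intro x
    rw [hSfdd n (pathOf s₀ n x) (pathOf_zero s₀ n x)]
    congr 1
    apply cylinder_wP n s₀ x (pathOf s₀ n x) (pathOf_zero s₀ n x)
    intro i
    rw [pathOf_step s₀ n x (i : ℕ) i.isLt]
  rw [integral_eq_tsum P₂ s₀ n W hWmeas (wR n) (wR_nonneg n) h0W hcylW F hFmeas M hM,
    integral_eq_tsum P₁ s₀ n S hSmeas (wP s₀ n) (wP_nonneg s₀ n) h0S hcylS F hFmeas M hM]
  exact main_ineq hp hp1 (fun s hs => (hqfact s hs).1) (fun s hs => (hqfact s hs).2)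
    (fun n => (hwRfact n).1) (fun n => (hwRfact n).2)
    (fun n s hs => (hwPfact n s hs).1) (fun n s hs => (hwPfact n s hs).2)
    n s₀ hs₀ F M hFmono hM
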